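/- Let μ and μ_n (n ≥ 1) be Borel probability measures on (0,∞) with ∫ |log x| dμ(x) < ∞ and ∫ |log x| dμ_n(x) < ∞ for all n, such that μ_n → μ weakly and ∫ |log x| dμ_n(x) → ∫ |log x| dμ(x). Then for every sequence (c_n) in (0,1] with c_n → 1, one has [μ_n]_{c_n} → [μ]_1 = exp ∫ log x dμ(x). -/

import Mathlib

open MeasureTheory Filter Topology
open scoped ENNReal

noncomputable def elogr (t : ℝ) : EReal := if t ≤ 0 then ⊥ else ((Real.log t : ℝ) : EReal)

/-- The Halász–Székely kernel, with values in `[-∞, +∞)` (`EReal`). -/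
noncomputable def hsKernel (c x y : ℝ) : EReal :=
  if c = 0 then ((Real.log y + y⁻¹ * x - 1 : ℝ) : EReal)
  else ((Real.log y : ℝ) : EReal) + ((c⁻¹ : ℝ) : EReal) * elogr (c * y⁻¹ * x + 1 - c)

/-- The nonnegative part of an extended real, as an element of `[0,∞]`. -/
noncomputable def erealToENNReal (x : EReal) : ℝ≥0∞ :=
  if x = ⊤ then ⊤ else ENNReal.ofReal x.toReal

/-- Integral of an `EReal`-valued function: positive part minus negative part. -/
noncomputable def eIntegral (μ : Measure ℝ) (f : ℝ → EReal) : EReal :=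
  ((∫⁻ x, erealToENNReal (f x) ∂μ : ℝ≥0∞) : EReal) - ((∫⁻ x, erealToENNReal (-f x) ∂μ : ℝ≥0∞) : EReal)

/-- Exponential on `EReal`, with values in `[0,∞]`. -/
noncomputable def eexp (x : EReal) : ℝ≥0∞ :=
  if x = ⊤ then ⊤ else if x = ⊥ then 0 else ENNReal.ofReal (Real.exp x.toReal)

/-- The Halász–Székely barycenter `[μ]_c ∈ [0,∞]`. -/
noncomputable def hsBary (c : ℝ) (μ : Measure ℝ) : ℝ≥0∞ :=
  eexp (⨅ y : {y : ℝ // 0 < y}, eIntegral μ (fun x => hsKernel c x y))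

/-- The function `B`. -/
noncomputable def hsB (c : ℝ) : ℝ :=
  if c = 0 then 0 else if c = 1 then 1 else c * (1 - c) ^ ((1 - c) / c)

/-- The uniform probability measure on the entries of a tuple. -/
noncomputable def unifMeasure {n : ℕ} (x : Fin n → ℝ) : Measure ℝ :=
  (n : ℝ≥0∞)⁻¹ • ∑ i, MeasureTheory.Measure.dirac (x i)

/-- The Halász–Székely mean of a tuple. -/
noncomputable def hsMean (c : ℝ) {n : ℕ} (x : Fin n → ℝ) : ℝ≥0∞ := hsBary c (unifMeasure x)

/-- The `k`-th symmetric mean of an `n`-tuple. -/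
noncomputable def symMean {n : ℕ} (k : ℕ) (x : Fin n → ℝ) : ℝ :=
  ((∑ s ∈ Finset.univ.powersetCard k, ∏ i ∈ s, x i) / (n.choose k)) ^ ((k : ℝ)⁻¹)








lemma coe_ennreal_fin {a : ℝ≥0∞} (h : a ≠ ⊤) : (a : EReal) = ((a.toReal : ℝ) : EReal) := by
  have hb : (a : EReal) ≠ ⊥ := fun hh => by simpa [hh] using EReal.coe_ennreal_nonneg a
  have ht : (a : EReal) ≠ ⊤ := by rwa [ne_eq, EReal.coe_ennreal_eq_top_iff]
  rw [← EReal.coe_toReal ht hb, EReal.toReal_coe_ennreal]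

lemma erealToENNReal_coe (r : ℝ) : erealToENNReal (r : EReal) = ENNReal.ofReal r := by
  simp [erealToENNReal]

lemma erealToENNReal_mono {x y : EReal} (h : x ≤ y) : erealToENNReal x ≤ erealToENNReal y := by
  unfold erealToENNReal
  by_cases hy : y = ⊤
  · simp [hy]
  · have hx : x ≠ ⊤ := fun hx => hy (top_le_iff.mp (hx ▸ h))
    simp only [hx, hy, if_false]
    by_cases hxb : x = ⊥
    · simp [hxb, EReal.toReal_bot, ENNReal.ofReal_zero]
    · by_cases hyb : y = ⊥
      · exact absurd (le_bot_iff.mp (hyb ▸ h)) hxb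
      · exact ENNReal.ofReal_le_ofReal (EReal.toReal_le_toReal h hxb hy)

lemma ae_pos {ν : Measure ℝ} (h : ν (Set.Iic 0) = 0) : ∀ᵐ x ∂ν, 0 < x := by
  rw [ae_iff]
  convert h using 2
  ext x; simp [not_lt]

lemma lintegral_ofReal_lt_top {ν : Measure ℝ} {g : ℝ → ℝ} (hg : Integrable g ν) :
    ∫⁻ x, ENNReal.ofReal (g x) ∂ν < ⊤ := by
  refine lt_of_le_of_lt (lintegral_mono fun x => ?_) hg.hasFiniteIntegral
  rw [← ofReal_norm]
  exact ENNReal.ofReal_le_ofReal (le_abs_self _)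

lemma eIntegral_coe {ν : Measure ℝ} {g : ℝ → ℝ} (hg : Integrable g ν) :
    eIntegral ν (fun x => ((g x : ℝ) : EReal)) = ((∫ x, g x ∂ν : ℝ) : EReal) := by
  unfold eIntegral
  have h1 : ∀ x : ℝ, erealToENNReal ((g x : ℝ) : EReal) = ENNReal.ofReal (g x) := fun x =>
    erealToENNReal_coe _
  have h2 : ∀ x : ℝ, erealToENNReal (-((g x : ℝ) : EReal)) = ENNReal.ofReal (-g x) := fun x => by
    rw [← EReal.coe_neg]; exact erealToENNReal_coe _
  simp_rw [h1, h2]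
  rw [integral_eq_lintegral_pos_part_sub_lintegral_neg_part hg]
  have hp := lintegral_ofReal_lt_top hg
  have hn := lintegral_ofReal_lt_top hg.neg
  simp only [Pi.neg_apply] at hn
  rw [coe_ennreal_fin hp.ne, coe_ennreal_fin hn.ne, ← EReal.coe_sub]

lemma eIntegral_congr_ae {ν : Measure ℝ} {f g : ℝ → EReal} (h : f =ᵐ[ν] g) :
    eIntegral ν f = eIntegral ν g := by
  unfold eIntegral
  have h1 : (fun x => erealToENNReal (f x)) =ᵐ[ν] fun x => erealToENNReal (g x) :=
    h.mono fun x hx => by simp [hx]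
  have h2 : (fun x => erealToENNReal (-f x)) =ᵐ[ν] fun x => erealToENNReal (-g x) :=
    h.mono fun x hx => by simp [hx]
  rw [lintegral_congr_ae h1, lintegral_congr_ae h2]

lemma le_eIntegral {ν : Measure ℝ} {f : ℝ → EReal} {g : ℝ → ℝ}
    (hfg : ∀ᵐ x ∂ν, ((g x : ℝ) : EReal) ≤ f x) (hg : Integrable g ν) :
    ((∫ x, g x ∂ν : ℝ) : EReal) ≤ eIntegral ν f := by
  unfold eIntegral
  have hA : ∫⁻ x, ENNReal.ofReal (g x) ∂ν ≤ ∫⁻ x, erealToENNReal (f x) ∂ν := by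
    refine lintegral_mono_ae (hfg.mono fun x hx => ?_)
    rw [← erealToENNReal_coe]; exact erealToENNReal_mono hx
  have hB : ∫⁻ x, erealToENNReal (-f x) ∂ν ≤ ∫⁻ x, ENNReal.ofReal (-g x) ∂ν := by
    refine lintegral_mono_ae (hfg.mono fun x hx => ?_)
    rw [← erealToENNReal_coe]
    exact erealToENNReal_mono (by rw [EReal.coe_neg]; exact EReal.neg_le_neg_iff.mpr hx)
  have hp := lintegral_ofReal_lt_top hg
  have hn := lintegral_ofReal_lt_top hg.neg
  simp only [Pi.neg_apply] at hn
  rw [integral_eq_lintegral_pos_part_sub_lintegral_neg_part hg]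
  refine le_trans ?_ (EReal.sub_le_sub (EReal.coe_ennreal_le_coe_ennreal_iff.mpr hA)
    (EReal.coe_ennreal_le_coe_ennreal_iff.mpr hB))
  rw [coe_ennreal_fin hp.ne, coe_ennreal_fin hn.ne, ← EReal.coe_sub]


lemma log_le_kern {c x y : ℝ} (hc : 0 < c) (hc1 : c ≤ 1) (hx : 0 < x) (hy : 0 < y) :
    Real.log x ≤ Real.log y + c⁻¹ * Real.log (c * y⁻¹ * x + 1 - c) := by
  set t := y⁻¹ * x with ht
  have htpos : 0 < t := by positivity
  have key : c * Real.log t ≤ Real.log (c * t + 1 - c) := by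
    have h := strictConcaveOn_log_Ioi.concaveOn.2 (Set.mem_Ioi.mpr htpos)
      (Set.mem_Ioi.mpr one_pos) hc.le (by linarith : (0:ℝ) ≤ 1 - c) (by ring)
    rw [smul_eq_mul, smul_eq_mul, smul_eq_mul, smul_eq_mul, Real.log_one, mul_one, mul_zero,
      add_zero] at h
    have e : c * t + (1 - c) = c * t + 1 - c := by ring
    rwa [e] at h
  have harg : c * y⁻¹ * x = c * t := by ring
  rw [harg]
  have h2 : Real.log t ≤ c⁻¹ * Real.log (c * t + 1 - c) := by
    have := mul_le_mul_of_nonneg_left key (inv_nonneg.mpr hc.le)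
    rwa [← mul_assoc, inv_mul_cancel₀ hc.ne', one_mul] at this
  have h3 : Real.log t = Real.log x - Real.log y := by
    rw [ht, Real.log_mul (inv_ne_zero hy.ne') hx.ne', Real.log_inv]; ring
  linarith

lemma kern_abs_le {c x : ℝ} (hc : 0 < c) (hc1 : c ≤ 1) (hx : 0 < x) :
    |c⁻¹ * Real.log (c * x + 1 - c)| ≤ c⁻¹ * (|Real.log x| + |Real.log c|) := by
  have harg : 0 < c * x + 1 - c := by nlinarith
  rw [abs_mul, abs_of_nonneg (inv_nonneg.mpr hc.le)]
  refine mul_le_mul_of_nonneg_left ?_ (inv_nonneg.mpr hc.le)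
  rcases le_or_gt 1 x with h1 | h1
  · have hle : c * x + 1 - c ≤ x := by nlinarith
    have hge : (1 : ℝ) ≤ c * x + 1 - c := by nlinarith
    rw [abs_of_nonneg (Real.log_nonneg hge)]
    calc Real.log (c * x + 1 - c) ≤ Real.log x := (Real.log_le_log_iff harg hx).mpr hle
      _ ≤ |Real.log x| := le_abs_self _
      _ ≤ |Real.log x| + |Real.log c| := le_add_of_nonneg_right (abs_nonneg _)
  · have hle : c * x + 1 - c ≤ 1 := by nlinarith
    have hge : c * x ≤ c * x + 1 - c := by nlinarith
    have hcx : 0 < c * x := by positivity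
    rw [abs_of_nonpos (Real.log_nonpos harg.le hle)]
    have h2 : Real.log (c * x) ≤ Real.log (c * x + 1 - c) :=
      (Real.log_le_log_iff hcx harg).mpr hge
    rw [Real.log_mul hc.ne' hx.ne'] at h2
    have := neg_abs_le (Real.log c)
    have := neg_abs_le (Real.log x)
    linarith

lemma kern_le {c x M : ℝ} (hc : 0 < c) (hc1 : c ≤ 1) (hx : 0 < x) (hM : 0 < M) :
    c⁻¹ * Real.log (c * x + 1 - c) ≤ Real.log x + (c⁻¹ - 1) * |Real.log x|
      + c⁻¹ * (1 - c) / Real.exp (-(2*M)) + 2 * (|Real.log x| - min |Real.log x| M) := by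
  have harg : 0 < c * x + 1 - c := by nlinarith
  have hci : (1:ℝ) ≤ c⁻¹ := (one_le_inv_iff₀.mpr ⟨hc, hc1⟩)
  have hmin : min |Real.log x| M ≤ |Real.log x| := min_le_left _ _
  have hδ : (0:ℝ) < Real.exp (-(2*M)) := Real.exp_pos _
  have hthird : 0 ≤ c⁻¹ * (1 - c) / Real.exp (-(2*M)) :=
    div_nonneg (mul_nonneg (by positivity) (by linarith)) hδ.le
  rcases le_or_gt 1 x with h1 | h1
  · have hle : c * x + 1 - c ≤ x := by nlinarith
    have hlx : 0 ≤ Real.log x := Real.log_nonneg h1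
    have h2 : Real.log (c * x + 1 - c) ≤ Real.log x := (Real.log_le_log_iff harg hx).mpr hle
    have h3 : c⁻¹ * Real.log (c * x + 1 - c) ≤ c⁻¹ * Real.log x :=
      mul_le_mul_of_nonneg_left h2 (by linarith)
    rw [abs_of_nonneg hlx] at *
    nlinarith
  · have hlx : Real.log x ≤ 0 := Real.log_nonpos hx.le h1.le
    rw [abs_of_nonpos hlx] at *
    rcases le_or_gt (Real.exp (-(2*M))) x with h2 | h2
    · -- δ ≤ x < 1
      have hle : c * x + 1 - c ≤ x + (1 - c) := by nlinarith
      have hxpos' : 0 < x + (1 - c) := by linarith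
      have hlog1 : Real.log (c * x + 1 - c) ≤ Real.log (x + (1 - c)) :=
        (Real.log_le_log_iff harg hxpos').mpr hle
      have hlog2 : Real.log (x + (1 - c)) ≤ Real.log x + (1 - c) / x := by
        have hq : 0 < (x + (1 - c)) / x := by positivity
        have := Real.log_le_sub_one_of_pos hq
        rw [Real.log_div hxpos'.ne' hx.ne'] at this
        have he : (x + (1 - c)) / x - 1 = (1 - c) / x := by field_simp; ring
        linarith [he ▸ this]
      have hL : Real.log (c * x + 1 - c) ≤ Real.log x + (1 - c) / x := le_trans hlog1 hlog2
      have h3 : c⁻¹ * Real.log (c * x + 1 - c) ≤ c⁻¹ * (Real.log x + (1 - c) / x) :=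
        mul_le_mul_of_nonneg_left hL (by linarith)
      have h4 : c⁻¹ * ((1 - c) / x) ≤ c⁻¹ * (1 - c) / Real.exp (-(2*M)) := by
        rw [mul_div_assoc]
        refine mul_le_mul_of_nonneg_left ?_ (by linarith)
        exact div_le_div_of_nonneg_left (by linarith) hδ h2
      have h5 : c⁻¹ * Real.log x ≤ Real.log x := by nlinarith
      nlinarith
    · -- x < δ
      have hle : c * x + 1 - c ≤ 1 := by nlinarith
      have hL0 : c⁻¹ * Real.log (c * x + 1 - c) ≤ 0 :=
        mul_nonpos_of_nonneg_of_nonpos (by linarith) (Real.log_nonpos harg.le hle)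
      have hlt : Real.log x < -(2*M) := by
        have := Real.log_lt_log hx h2
        rwa [Real.log_exp] at this
      have hmin2 : min (-Real.log x) M = M := min_eq_right (by linarith)
      rw [hmin2]
      nlinarith




lemma hsKernel_eq {c x y : ℝ} (hc : 0 < c) (hc1 : c ≤ 1) (hx : 0 < x) (hy : 0 < y) :
    hsKernel c x y = ((Real.log y + c⁻¹ * Real.log (c * y⁻¹ * x + 1 - c) : ℝ) : EReal) := by
  have h0 : 0 < c * y⁻¹ * x := by positivity
  have harg : 0 < c * y⁻¹ * x + 1 - c := by linarith
  rw [hsKernel, if_neg hc.ne', elogr, if_neg (not_le.mpr harg), ← EReal.coe_mul, ← EReal.coe_add]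

lemma hsKernel_one {x y : ℝ} (hx : 0 < x) (hy : 0 < y) :
    hsKernel 1 x y = ((Real.log x : ℝ) : EReal) := by
  rw [hsKernel_eq one_pos le_rfl hx hy, EReal.coe_eq_coe_iff]
  have : (1:ℝ) * y⁻¹ * x + 1 - 1 = y⁻¹ * x := by ring
  rw [this, inv_one, one_mul, Real.log_mul (inv_ne_zero hy.ne') hx.ne', Real.log_inv]
  ring

lemma trunc_abs_le {t M : ℝ} (hM : 0 ≤ M) :
    |t - max (min t M) (-M)| ≤ |t| - min |t| M := by
  rcases le_or_gt t M with h1 | h1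
  · rcases le_or_gt (-M) t with h2 | h2
    · rw [min_eq_left h1, max_eq_left h2, sub_self, abs_zero]
      have h3 : min |t| M ≤ |t| := min_le_left _ _
      linarith
    · have ht : t < 0 := by linarith
      rw [min_eq_left h1, max_eq_right h2.le,
        abs_of_nonpos (by linarith : t - -M ≤ 0), abs_of_nonpos ht.le,
        min_eq_right (by linarith : M ≤ -t)]
      linarith
  · rw [min_eq_right h1.le, max_eq_left (by linarith : -M ≤ M),
      abs_of_nonneg (by linarith : (0:ℝ) ≤ t - M), abs_of_nonneg (by linarith : (0:ℝ) ≤ t),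
      min_eq_right h1.le]

lemma gBCF_eq {M x : ℝ} (hM : 0 < M) (hx : 0 < x) :
    min |Real.log (max x (Real.exp (-M)))| M = min |Real.log x| M := by
  rcases le_or_gt (Real.exp (-M)) x with h | h
  · rw [max_eq_left h]
  · have hlt : Real.log x < -M := by
      have := Real.log_lt_log hx h
      rwa [Real.log_exp] at this
    rw [max_eq_right h.le, Real.log_exp, abs_neg, abs_of_nonneg hM.le, min_self,
      min_eq_right (by rw [abs_of_nonpos (by linarith : Real.log x ≤ 0)]; linarith)]

lemma lBCF_eq {M x : ℝ} (hM : 0 < M) (hx : 0 < x) :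
    max (min (Real.log (max x (Real.exp (-M)))) M) (-M)
      = max (min (Real.log x) M) (-M) := by
  rcases le_or_gt (Real.exp (-M)) x with h | h
  · rw [max_eq_left h]
  · have hlt : Real.log x < -M := by
      have := Real.log_lt_log hx h
      rwa [Real.log_exp] at this
    rw [max_eq_right h.le, Real.log_exp, min_eq_left (by linarith : -M ≤ M),
      min_eq_left (by linarith : Real.log x ≤ M), max_self,
      max_eq_right hlt.le]

noncomputable def gBCF (M : ℝ) (hM : 0 < M) : BoundedContinuousFunction ℝ ℝ :=
  BoundedContinuousFunction.ofNormedAddCommGroup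
    (fun x => min |Real.log (max x (Real.exp (-M)))| M)
    (by
      have hmax : Continuous fun x : ℝ => max x (Real.exp (-M)) :=
        continuous_id.max continuous_const
      have hlog : Continuous fun x : ℝ => Real.log (max x (Real.exp (-M))) :=
        Real.continuousOn_log.comp_continuous hmax fun x =>
          (ne_of_gt (lt_max_of_lt_right (Real.exp_pos _)))
      exact (hlog.abs).min continuous_const)
    M
    (fun x => by
      rw [Real.norm_eq_abs, abs_of_nonneg (le_min (abs_nonneg _) hM.le)]
      exact min_le_right _ _)

noncomputable def lBCF (M : ℝ) (hM : 0 < M) : BoundedContinuousFunction ℝ ℝ :=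
  BoundedContinuousFunction.ofNormedAddCommGroup
    (fun x => max (min (Real.log (max x (Real.exp (-M)))) M) (-M))
    (by
      have hmax : Continuous fun x : ℝ => max x (Real.exp (-M)) :=
        continuous_id.max continuous_const
      have hlog : Continuous fun x : ℝ => Real.log (max x (Real.exp (-M))) :=
        Real.continuousOn_log.comp_continuous hmax fun x =>
          (ne_of_gt (lt_max_of_lt_right (Real.exp_pos _)))
      exact (hlog.min continuous_const).max continuous_const)
    M
    (fun x => by
      rw [Real.norm_eq_abs, abs_le]
      constructor
      · exact le_max_right _ _
      · exact max_le (min_le_right _ _) (by linarith))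


lemma integrable_log {ν : Measure ℝ} (h : Integrable (fun x => |Real.log x|) ν) :
    Integrable Real.log ν :=
  h.mono' Real.measurable_log.aestronglyMeasurable
    (ae_of_all _ fun x => by rw [Real.norm_eq_abs])

lemma integrable_min {ν : Measure ℝ} (h : Integrable (fun x => |Real.log x|) ν) {M : ℝ}
    (hM : 0 ≤ M) : Integrable (fun x => min |Real.log x| M) ν :=
  h.mono' (Real.measurable_log.abs.min measurable_const).aestronglyMeasurable
    (ae_of_all _ fun x => by
      rw [Real.norm_eq_abs, abs_of_nonneg (le_min (abs_nonneg _) hM)]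
      exact min_le_left _ _)

lemma integrable_trunc {ν : Measure ℝ} [IsProbabilityMeasure ν] {M : ℝ} (hM : 0 ≤ M) :
    Integrable (fun x => max (min (Real.log x) M) (-M)) ν :=
  (integrable_const M).mono'
    (((Real.measurable_log.min measurable_const).max measurable_const).aestronglyMeasurable)
    (ae_of_all _ fun x => by
      rw [Real.norm_eq_abs, abs_le]
      exact ⟨le_max_right _ _, max_le (min_le_right _ _) (by linarith)⟩)

lemma integrable_kern {ν : Measure ℝ} [IsProbabilityMeasure ν] (hν : ν (Set.Iic 0) = 0)
    (h : Integrable (fun x => |Real.log x|) ν) {c : ℝ} (hc : 0 < c) (hc1 : c ≤ 1) :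
    Integrable (fun x => c⁻¹ * Real.log (c * x + 1 - c)) ν := by
  have hmeas : AEStronglyMeasurable (fun x => c⁻¹ * Real.log (c * x + 1 - c)) ν := by
    refine Measurable.aestronglyMeasurable ?_
    exact (Real.measurable_log.comp (((measurable_id.const_mul c).add_const 1).add_const (-c))).const_mul _
  refine Integrable.mono' ((h.add (integrable_const |Real.log c|)).const_mul c⁻¹) hmeas ?_
  filter_upwards [ae_pos hν] with x hx
  rw [Real.norm_eq_abs]
  exact kern_abs_le hc hc1 hx

/-- per-measure estimate for step A -/
lemma trunc_est {ν : Measure ℝ} [IsProbabilityMeasure ν]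
    (h : Integrable (fun x => |Real.log x|) ν) {M : ℝ} (hM : 0 < M) :
    |∫ x, Real.log x ∂ν - ∫ x, max (min (Real.log x) M) (-M) ∂ν|
      ≤ ∫ x, |Real.log x| ∂ν - ∫ x, min |Real.log x| M ∂ν := by
  have ilog := integrable_log h
  have itr := integrable_trunc (ν := ν) hM.le
  have imin := integrable_min h hM.le
  rw [← integral_sub ilog itr, ← integral_sub h imin]
  calc |∫ x, (Real.log x - max (min (Real.log x) M) (-M)) ∂ν|
      ≤ ∫ x, |Real.log x - max (min (Real.log x) M) (-M)| ∂ν := by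
        simpa [Real.norm_eq_abs] using norm_integral_le_integral_norm
          (fun x => Real.log x - max (min (Real.log x) M) (-M)) (μ := ν)
    _ ≤ ∫ x, (|Real.log x| - min |Real.log x| M) ∂ν := by
        refine integral_mono (ilog.sub itr).abs (h.sub imin) fun x => trunc_abs_le hM.le


lemma tail_small {ν : Measure ℝ} [IsProbabilityMeasure ν]
    (h : Integrable (fun x => |Real.log x|) ν) :
    ∀ ε > (0:ℝ), ∃ M : ℝ, 0 < M ∧
      ∫ x, |Real.log x| ∂ν - ∫ x, min |Real.log x| M ∂ν < ε := by
  have hdom : Tendsto (fun m : ℕ => ∫ x, min |Real.log x| (m : ℝ) ∂ν) atTop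
      (𝓝 (∫ x, |Real.log x| ∂ν)) := by
    refine tendsto_integral_of_dominated_convergence (fun x => |Real.log x|)
      (fun m => (Real.measurable_log.abs.min measurable_const).aestronglyMeasurable)
      h (fun m => ae_of_all _ fun x => ?_) (ae_of_all _ fun x => ?_)
    · rw [Real.norm_eq_abs, abs_of_nonneg (le_min (abs_nonneg _) (Nat.cast_nonneg m))]
      exact min_le_left _ _
    · exact tendsto_atTop_of_eventually_const (i₀ := ⌈|Real.log x|⌉₊) fun m hm =>
        min_eq_left ((Nat.le_ceil _).trans (Nat.cast_le.mpr hm))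
  intro ε hε
  have := hdom.eventually (Metric.ball_mem_nhds _ hε)
  rw [eventually_atTop] at this
  obtain ⟨N, hN⟩ := this
  have hball := hN (max N 1) (le_max_left _ _)
  rw [Real.dist_eq, abs_lt] at hball
  refine ⟨(max N 1 : ℕ), by exact_mod_cast Nat.lt_of_lt_of_le Nat.one_pos (le_max_right N 1),
    by linarith [hball.1]⟩


/-- continuity at `c = 1` in the `1`-Wasserstein space over `(0,∞)` with the
logarithmic distance. -/
theorem hsBary_cont_at_one (μ : Measure ℝ) [IsProbabilityMeasure μ]
    (hsupp : μ (Set.Iic 0) = 0) (hint : Integrable (fun x => |Real.log x|) μ)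
    (μs : ℕ → Measure ℝ) (hprob : ∀ n, IsProbabilityMeasure (μs n))
    (hsupps : ∀ n, μs n (Set.Iic 0) = 0)
    (hints : ∀ n, Integrable (fun x => |Real.log x|) (μs n))
    (hweak : ∀ φ : BoundedContinuousFunction ℝ ℝ,
      Filter.Tendsto (fun n => ∫ x, φ x ∂(μs n)) Filter.atTop (nhds (∫ x, φ x ∂μ)))
    (hlog : Filter.Tendsto (fun n => ∫ x, |Real.log x| ∂(μs n)) Filter.atTop
      (nhds (∫ x, |Real.log x| ∂μ)))
    (cs : ℕ → ℝ) (hcs : ∀ n, cs n ∈ Set.Ioc (0 : ℝ) 1)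
    (hcc : Filter.Tendsto cs Filter.atTop (nhds 1)) :
    Filter.Tendsto (fun n => hsBary (cs n) (μs n)) Filter.atTop (nhds (hsBary 1 μ)) ∧
      hsBary 1 μ = ENNReal.ofReal (Real.exp (∫ x, Real.log x ∂μ)) := by
  haveI hne : Nonempty {y : ℝ // 0 < y} := ⟨⟨1, one_pos⟩⟩
  set ℓ := ∫ x, Real.log x ∂μ with hℓdef
  -- Part 2 : value at c = 1
  have hpart2 : hsBary 1 μ = ENNReal.ofReal (Real.exp ℓ) := by
    have hval : ∀ y : {y : ℝ // 0 < y},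
        eIntegral μ (fun x => hsKernel 1 x ↑y) = ((ℓ : ℝ) : EReal) := fun y => by
      rw [eIntegral_congr_ae ((ae_pos hsupp).mono fun x hx => hsKernel_one hx y.2),
        eIntegral_coe (integrable_log hint)]
    rw [hsBary]
    simp_rw [hval]
    rw [iInf_const, eexp, if_neg (EReal.coe_ne_top ℓ), if_neg (EReal.coe_ne_bot ℓ),
      EReal.toReal_coe]
  refine ⟨?_, hpart2⟩
  -- weak convergence applied to the auxiliary bounded continuous functions
  have hminT : ∀ M : ℝ, ∀ hM : 0 < M,
      Tendsto (fun n => ∫ x, min |Real.log x| M ∂(μs n)) atTop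
        (𝓝 (∫ x, min |Real.log x| M ∂μ)) := by
    intro M hM
    have key : ∀ ν : Measure ℝ, ν (Set.Iic 0) = 0 →
        ∫ x, (gBCF M hM) x ∂ν = ∫ x, min |Real.log x| M ∂ν := fun ν hν =>
      integral_congr_ae ((ae_pos hν).mono fun x hx => by
        simp only [gBCF, BoundedContinuousFunction.coe_ofNormedAddCommGroup]
        exact gBCF_eq hM hx)
    have h := hweak (gBCF M hM)
    rw [key μ hsupp] at h
    exact h.congr fun n => key (μs n) (hsupps n)
  have htruncT : ∀ M : ℝ, ∀ hM : 0 < M,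
      Tendsto (fun n => ∫ x, max (min (Real.log x) M) (-M) ∂(μs n)) atTop
        (𝓝 (∫ x, max (min (Real.log x) M) (-M) ∂μ)) := by
    intro M hM
    have key : ∀ ν : Measure ℝ, ν (Set.Iic 0) = 0 →
        ∫ x, (lBCF M hM) x ∂ν = ∫ x, max (min (Real.log x) M) (-M) ∂ν := fun ν hν =>
      integral_congr_ae ((ae_pos hν).mono fun x hx => by
        simp only [lBCF, BoundedContinuousFunction.coe_ofNormedAddCommGroup]
        exact lBCF_eq hM hx)
    have h := hweak (lBCF M hM)
    rw [key μ hsupp] at h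
    exact h.congr fun n => key (μs n) (hsupps n)
  -- Step A : convergence of the log integrals
  have hA : Tendsto (fun n => ∫ x, Real.log x ∂(μs n)) atTop (𝓝 ℓ) := by
    rw [Metric.tendsto_atTop]
    intro ε hε
    obtain ⟨M, hM, hMε⟩ := tail_small hint (ε/8) (by linarith)
    have h3 : Tendsto (fun n => ∫ x, |Real.log x| ∂(μs n) - ∫ x, min |Real.log x| M ∂(μs n))
        atTop (𝓝 (∫ x, |Real.log x| ∂μ - ∫ x, min |Real.log x| M ∂μ)) :=
      hlog.sub (hminT M hM)
    have h4 : ∀ᶠ n in atTop,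
        ∫ x, |Real.log x| ∂(μs n) - ∫ x, min |Real.log x| M ∂(μs n) < ε/4 :=
      h3.eventually_lt_const (by linarith)
    have h5 := (htruncT M hM).eventually (Metric.ball_mem_nhds _ (show (0:ℝ) < ε/4 by linarith))
    rw [← eventually_atTop]
    filter_upwards [h4, h5] with n g4 g5
    haveI := hprob n
    have e1 := trunc_est (hints n) hM
    have e2 := trunc_est hint hM
    rw [Real.dist_eq] at g5 ⊢
    have t1 := abs_sub_le (∫ x, Real.log x ∂(μs n))
      (∫ x, max (min (Real.log x) M) (-M) ∂(μs n)) ℓ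
    have t2 := abs_sub_le (∫ x, max (min (Real.log x) M) (-M) ∂(μs n))
      (∫ x, max (min (Real.log x) M) (-M) ∂μ) ℓ
    have e2' : |∫ x, max (min (Real.log x) M) (-M) ∂μ - ℓ| ≤
        ∫ x, |Real.log x| ∂μ - ∫ x, min |Real.log x| M ∂μ := by
      rw [abs_sub_comm]; exact e2
    linarith
  -- the two real sequences
  set a : ℕ → ℝ := fun n => ∫ x, Real.log x ∂(μs n) with hadef
  set b : ℕ → ℝ := fun n => ∫ x, (cs n)⁻¹ * Real.log (cs n * x + 1 - cs n) ∂(μs n) with hbdef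
  have hab : ∀ n, a n ≤ b n := by
    intro n
    haveI := hprob n
    refine integral_mono_ae (integrable_log (hints n))
      (integrable_kern (hsupps n) (hints n) (hcs n).1 (hcs n).2) ?_
    filter_upwards [ae_pos (hsupps n)] with x hx
    have h := log_le_kern (hcs n).1 (hcs n).2 hx one_pos
    rwa [Real.log_one, inv_one, mul_one, zero_add] at h
  -- Step B : eventual upper bound for b
  have hB' : ∀ ε > (0:ℝ), ∀ᶠ n in atTop, b n ≤ a n + ε := by
    intro ε hε
    obtain ⟨M, hM, hMε⟩ := tail_small hint (ε/8) (by linarith)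
    set A := ∫ x, |Real.log x| ∂μ with hAdef
    have h3 : Tendsto (fun n => ∫ x, |Real.log x| ∂(μs n) - ∫ x, min |Real.log x| M ∂(μs n))
        atTop (𝓝 (A - ∫ x, min |Real.log x| M ∂μ)) := hlog.sub (hminT M hM)
    have h4 : ∀ᶠ n in atTop,
        ∫ x, |Real.log x| ∂(μs n) - ∫ x, min |Real.log x| M ∂(μs n) < ε/4 :=
      h3.eventually_lt_const (by linarith)
    have hAbd : ∀ᶠ n in atTop, ∫ x, |Real.log x| ∂(μs n) < A + 1 :=
      hlog.eventually_lt_const (by linarith)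
    have hcinv : Tendsto (fun n => (cs n)⁻¹) atTop (𝓝 1) := by
      have := hcc.inv₀ one_ne_zero
      simpa using this
    have hterm1 : ∀ᶠ n in atTop, ((cs n)⁻¹ - 1) * (A + 1) < ε/4 := by
      have : Tendsto (fun n => ((cs n)⁻¹ - 1) * (A + 1)) atTop (𝓝 0) := by
        have := (hcinv.sub_const 1).mul_const (A + 1)
        simpa using this
      exact this.eventually_lt_const (by linarith)
    have hterm2 : ∀ᶠ n in atTop,
        (cs n)⁻¹ * (1 - cs n) / Real.exp (-(2*M)) < ε/4 := by
      have : Tendsto (fun n => (cs n)⁻¹ * (1 - cs n) / Real.exp (-(2*M))) atTop (𝓝 0) := by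
        have := (hcinv.mul ((tendsto_const_nhds : Tendsto (fun _ : ℕ => (1:ℝ)) atTop (𝓝 1)).sub hcc)).div_const (Real.exp (-(2*M)))
        simpa using this
      exact this.eventually_lt_const (by linarith)
    filter_upwards [h4, hAbd, hterm1, hterm2] with n g4 gA g1 g2
    haveI := hprob n
    obtain ⟨hc0, hc1⟩ := hcs n
    have hkey : b n ≤ ∫ x, (Real.log x + ((cs n)⁻¹ - 1) * |Real.log x|
        + (cs n)⁻¹ * (1 - cs n) / Real.exp (-(2*M))
        + 2 * (|Real.log x| - min |Real.log x| M)) ∂(μs n) := by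
      refine integral_mono_ae (integrable_kern (hsupps n) (hints n) hc0 hc1) ?_ ?_
      · exact (((integrable_log (hints n)).add ((hints n).const_mul _)).add
          (integrable_const _)).add (((hints n).sub (integrable_min (hints n) hM.le)).const_mul 2)
      · filter_upwards [ae_pos (hsupps n)] with x hx
        exact kern_le hc0 hc1 hx hM
    have i1 : Integrable (fun x => Real.log x) (μs n) := integrable_log (hints n)
    have i2 : Integrable (fun x => ((cs n)⁻¹ - 1) * |Real.log x|) (μs n) :=
      (hints n).const_mul _
    have i3 : Integrable (fun _ : ℝ => (cs n)⁻¹ * (1 - cs n) / Real.exp (-(2*M))) (μs n) :=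
      integrable_const _
    have imin := integrable_min (hints n) hM.le
    have isub : Integrable (fun x => |Real.log x| - min |Real.log x| M) (μs n) :=
      (hints n).sub imin
    have i4 : Integrable (fun x => 2 * (|Real.log x| - min |Real.log x| M)) (μs n) :=
      isub.const_mul 2
    have i12 : Integrable (fun x => Real.log x + ((cs n)⁻¹ - 1) * |Real.log x|) (μs n) :=
      i1.add i2
    have i123 : Integrable (fun x => Real.log x + ((cs n)⁻¹ - 1) * |Real.log x|
        + (cs n)⁻¹ * (1 - cs n) / Real.exp (-(2*M))) (μs n) := i12.add i3
    have hci : (1:ℝ) ≤ (cs n)⁻¹ := one_le_inv_iff₀.mpr ⟨hc0, hc1⟩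
    have hAn : 0 ≤ ∫ x, |Real.log x| ∂(μs n) := integral_nonneg fun x => abs_nonneg _
    have hmul : ((cs n)⁻¹ - 1) * (∫ x, |Real.log x| ∂(μs n)) ≤ ((cs n)⁻¹ - 1) * (A + 1) :=
      mul_le_mul_of_nonneg_left gA.le (by linarith)
    calc b n ≤ ∫ x, (Real.log x + ((cs n)⁻¹ - 1) * |Real.log x|
          + (cs n)⁻¹ * (1 - cs n) / Real.exp (-(2*M))
          + 2 * (|Real.log x| - min |Real.log x| M)) ∂(μs n) := hkey
      _ = (∫ x, (Real.log x + ((cs n)⁻¹ - 1) * |Real.log x|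
            + (cs n)⁻¹ * (1 - cs n) / Real.exp (-(2*M))) ∂(μs n))
          + ∫ x, 2 * (|Real.log x| - min |Real.log x| M) ∂(μs n) := integral_add i123 i4
      _ = ((∫ x, (Real.log x + ((cs n)⁻¹ - 1) * |Real.log x|) ∂(μs n))
            + ∫ _x : ℝ, (cs n)⁻¹ * (1 - cs n) / Real.exp (-(2*M)) ∂(μs n))
          + ∫ x, 2 * (|Real.log x| - min |Real.log x| M) ∂(μs n) := by
            rw [integral_add i12 i3]
      _ = (((∫ x, Real.log x ∂(μs n)) + ∫ x, ((cs n)⁻¹ - 1) * |Real.log x| ∂(μs n))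
            + ∫ _x : ℝ, (cs n)⁻¹ * (1 - cs n) / Real.exp (-(2*M)) ∂(μs n))
          + ∫ x, 2 * (|Real.log x| - min |Real.log x| M) ∂(μs n) := by
            rw [integral_add i1 i2]
      _ = a n + ((cs n)⁻¹ - 1) * (∫ x, |Real.log x| ∂(μs n))
          + (cs n)⁻¹ * (1 - cs n) / Real.exp (-(2*M))
          + 2 * (∫ x, |Real.log x| ∂(μs n) - ∫ x, min |Real.log x| M ∂(μs n)) := by
            rw [integral_const_mul, integral_const_mul, integral_const,
              integral_sub (hints n) imin]
            simp [measure_univ]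
            rfl
      _ ≤ a n + ε := by linarith
  -- convergence of b
  have hBtend : Tendsto b atTop (𝓝 ℓ) := by
    rw [Metric.tendsto_atTop]
    intro ε hε
    have h1 := hA.eventually (Metric.ball_mem_nhds ℓ (half_pos hε))
    have h2 := hB' (ε/2) (half_pos hε)
    rw [← eventually_atTop]
    filter_upwards [h1, h2] with n g1 g2
    have g3 := hab n
    rw [Real.dist_eq, abs_lt] at g1 ⊢
    constructor <;> [skip; skip] <;> [linarith [g1.1]; linarith [g1.2]]
  -- the infima
  set I : ℕ → EReal := fun n =>
    ⨅ y : {y : ℝ // 0 < y}, eIntegral (μs n) (fun x => hsKernel (cs n) x ↑y) with hIdef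
  have lower : ∀ n, ((a n : ℝ) : EReal) ≤ I n := by
    intro n
    haveI := hprob n
    refine le_iInf fun y => ?_
    refine le_eIntegral ?_ (integrable_log (hints n))
    filter_upwards [ae_pos (hsupps n)] with x hx
    rw [hsKernel_eq (hcs n).1 (hcs n).2 hx y.2]
    exact EReal.coe_le_coe_iff.mpr (log_le_kern (hcs n).1 (hcs n).2 hx y.2)
  have upper : ∀ n, I n ≤ ((b n : ℝ) : EReal) := by
    intro n
    haveI := hprob n
    obtain ⟨hc0, hc1⟩ := hcs n
    have hfe : (fun x => Real.log 1 + (cs n)⁻¹ * Real.log (cs n * (1:ℝ)⁻¹ * x + 1 - cs n))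
        = fun x => (cs n)⁻¹ * Real.log (cs n * x + 1 - cs n) := by
      funext x; rw [Real.log_one, inv_one, mul_one, zero_add]
    have hkint : Integrable
        (fun x => Real.log 1 + (cs n)⁻¹ * Real.log (cs n * (1:ℝ)⁻¹ * x + 1 - cs n)) (μs n) := by
      rw [hfe]; exact integrable_kern (hsupps n) (hints n) hc0 hc1
    have e1 : eIntegral (μs n) (fun x => hsKernel (cs n) x ↑(⟨1, one_pos⟩ : {y : ℝ // 0 < y}))
        = ((b n : ℝ) : EReal) := by
      rw [eIntegral_congr_ae ((ae_pos (hsupps n)).mono fun x hx =>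
          hsKernel_eq hc0 hc1 hx one_pos),
        eIntegral_coe hkint, EReal.coe_eq_coe_iff]
      show (∫ x, (Real.log 1 + (cs n)⁻¹ * Real.log (cs n * (1:ℝ)⁻¹ * x + 1 - cs n)) ∂(μs n))
        = ∫ x, (cs n)⁻¹ * Real.log (cs n * x + 1 - cs n) ∂(μs n)
      rw [hfe]
    exact le_of_le_of_eq (iInf_le _ (⟨1, one_pos⟩ : {y : ℝ // 0 < y})) e1
  have hItop : ∀ n, I n ≠ ⊤ := fun n => ne_top_of_le_ne_top (EReal.coe_ne_top _) (upper n)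
  have hIbot : ∀ n, I n ≠ ⊥ := fun n =>
    ne_bot_of_le_ne_bot (EReal.coe_ne_bot _) (lower n)
  have htr1 : ∀ n, a n ≤ (I n).toReal := fun n => by
    have := EReal.toReal_le_toReal (lower n) (EReal.coe_ne_bot _) (hItop n)
    rwa [EReal.toReal_coe] at this
  have htr2 : ∀ n, (I n).toReal ≤ b n := fun n => by
    have := EReal.toReal_le_toReal (upper n) (hIbot n) (EReal.coe_ne_top _)
    rwa [EReal.toReal_coe] at this
  have htend : Tendsto (fun n => (I n).toReal) atTop (𝓝 ℓ) :=
    tendsto_of_tendsto_of_tendsto_of_le_of_le hA hBtend htr1 htr2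
  have heq : ∀ n, hsBary (cs n) (μs n) = ENNReal.ofReal (Real.exp ((I n).toReal)) := fun n => by
    have h0 : hsBary (cs n) (μs n) = eexp (I n) := rfl
    rw [h0, eexp, if_neg (hItop n), if_neg (hIbot n)]
  rw [hpart2]
  have hfinal : Tendsto (fun n => ENNReal.ofReal (Real.exp ((I n).toReal))) atTop
      (𝓝 (ENNReal.ofReal (Real.exp ℓ))) :=
    (ENNReal.continuous_ofReal.tendsto _).comp ((Real.continuous_exp.tendsto _).comp htend)
  exact hfinal.congr fun n => (heq n).symm
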